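/- arXiv:1512.01721 — 3 statements merged into one kernel-verified Lean document; each statement's English description precedes it below -/
import Mathlib

section
/- Let e ≥ 1 and k ≥ 0 be integers, and let G₀ be the star good tree of total degree e: a good tree with e vertices having one central vertex v₀ adjacent to each of the other e−1 vertices, all of whose k marked points equal v₀. Then every good tree of total degree e with k marked points can be joined to G₀ by a finite chain of good trees in which each pair of consecutive good trees is connected by a conic deformation. -/
/-!
A *dual graph* is a finite tree equipped with a nonnegative integer degree for
each vertex and a finite multiset of vertices called marked points.
-/
structure DualGraph where
  V : Type
  fintypeV : Fintype V
  decEqV : DecidableEq V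
  graph : SimpleGraph V
  isTree : graph.IsTree
  deg : V → ℕ
  marks : Multiset V

attribute [instance] DualGraph.fintypeV DualGraph.decEqV

namespace DualGraph

/-- The total degree `deg(G) = Σ_v d_v`. -/
def totalDeg (G : DualGraph) : ℕ := ∑ v, G.deg v

/-- A good tree is a dual graph all of whose vertex degrees equal `1`. -/
def IsGoodTree (G : DualGraph) : Prop := ∀ v, G.deg v = 1

/-- `G.IsContractionAlong G₁ H` : the dual graph `G₁` is (isomorphic to) the
contraction of `G` along the nonempty connected (induced) subgraph on the
vertex set `H`: its vertices are the vertices of `G` not in `H` together with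
one extra vertex `v_H`; edges of `G` between vertices not in `H` survive, and a
vertex `u ∉ H` is joined to `v_H` exactly when `u` is adjacent in `G` to some
vertex of `H`; the degree of `v_H` is `Σ_{v ∈ H} d_v` and the other degrees are
unchanged; the marked points not in `H` survive and `v_H` is marked with
multiplicity the number of marked points of `G` lying in `H`. -/
def IsContractionAlong (G G₁ : DualGraph) (H : Finset G.V) : Prop :=
  H.Nonempty ∧ (SimpleGraph.induce (↑H : Set G.V) G.graph).Connected ∧
  ∃ e : ({v : G.V // v ∉ H} ⊕ Unit) ≃ G₁.V,
    (∀ u w : {v : G.V // v ∉ H},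
      G₁.graph.Adj (e (Sum.inl u)) (e (Sum.inl w)) ↔ G.graph.Adj u.1 w.1) ∧
    (∀ u : {v : G.V // v ∉ H},
      G₁.graph.Adj (e (Sum.inl u)) (e (Sum.inr ())) ↔ ∃ h ∈ H, G.graph.Adj u.1 h) ∧
    (∀ u : {v : G.V // v ∉ H}, G₁.deg (e (Sum.inl u)) = G.deg u.1) ∧
    G₁.deg (e (Sum.inr ())) = ∑ v ∈ H, G.deg v ∧
    (∀ u : {v : G.V // v ∉ H}, G₁.marks.count (e (Sum.inl u)) = G.marks.count u.1) ∧
    G₁.marks.count (e (Sum.inr ())) = Multiset.card (G.marks.filter (· ∈ H))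

/-- `K` is a conic deformation of `G` if `K` is obtained from `G` by
contracting a subgraph of total degree two. -/
def IsConicDeformation (K G : DualGraph) : Prop :=
  ∃ H : Finset G.V, (∑ v ∈ H, G.deg v) = 2 ∧ G.IsContractionAlong K H

/-- Two good trees are connected by a conic deformation if some dual graph `K`
is a conic deformation of both of them. -/
def ConnectedByConicDeformation (G₂ G₃ : DualGraph) : Prop :=
  ∃ K : DualGraph, K.IsConicDeformation G₂ ∧ K.IsConicDeformation G₃

/-- Isomorphism of dual graphs: a bijection of vertices preserving adjacency,
degrees and marked points (with multiplicity). -/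
def Iso (G G' : DualGraph) : Prop :=
  ∃ e : G.V ≃ G'.V,
    (∀ a b : G.V, G'.graph.Adj (e a) (e b) ↔ G.graph.Adj a b) ∧
    (∀ v : G.V, G'.deg (e v) = G.deg v) ∧
    (∀ v : G.V, G'.marks.count (e v) = G.marks.count v)

end DualGraph

/-- `G₀` is the star good tree of total degree `e` with `k` marked points: a
good tree of total degree `e` (hence with `e` vertices) having a central vertex
`v₀` adjacent to every other vertex (and no other edges), all of whose `k`
marked points equal `v₀`. -/
def DualGraph.IsStarGoodTree (G₀ : DualGraph) (e k : ℕ) : Prop :=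
  G₀.IsGoodTree ∧ G₀.totalDeg = e ∧
  ∃ v₀ : G₀.V, G₀.marks = Multiset.replicate k v₀ ∧
    ∀ a b : G₀.V, G₀.graph.Adj a b ↔ ((a = v₀ ∧ b ≠ v₀) ∨ (b = v₀ ∧ a ≠ v₀))


section Aux
open SimpleGraph

open SimpleGraph

/-- acyclicity from: every vertex has at most one neighbor of ≤ rank. -/
lemma acyclic_of_unique_down {V : Type*} [DecidableEq V] (G : SimpleGraph V) (rk : V → ℕ)
    (h : ∀ m x y, G.Adj m x → G.Adj m y → rk x ≤ rk m → rk y ≤ rk m → x = y) :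
    G.IsAcyclic := by
  intro v c hc
  have hne : c.support ≠ [] := by simp [SimpleGraph.Walk.support_ne_nil]
  obtain ⟨m, hm, hmax⟩ := c.support.toFinset.exists_max_image rk
    (by simpa [List.toFinset_eq_empty_iff] using hne)
  rw [List.mem_toFinset] at hm
  have hmax' : ∀ x ∈ c.support, rk x ≤ rk m := fun x hx => hmax x (List.mem_toFinset.2 hx)
  have hmemrot : ∀ x, x ∈ (c.rotate m hm).support → x ∈ c.support := by
    intro x hx
    rcases (SimpleGraph.Walk.support_eq_cons (c.rotate m hm)) ▸ hx with hx'
    rw [List.mem_cons] at hx'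
    rcases hx' with rfl | hx'
    · exact hm
    · have := (SimpleGraph.Walk.support_rotate c m hm).mem_iff.1 hx'
      exact List.mem_of_mem_tail this
  have hc' := hc.rotate hm
  set c' := c.rotate m hm with hcdef
  clear_value c'
  cases c' with
  | nil => exact hc'.ne_nil rfl
  | cons hadj q =>
    rename_i x
    have hxm : x ≠ m := hadj.ne'
    obtain ⟨y, h₂, q₂, hq₂⟩ := SimpleGraph.Walk.exists_eq_cons_of_ne (Ne.symm hxm) q.reverse
    -- h₂ : G.Adj m y
    have hyq : y ∈ q.support := by
      have : y ∈ q.reverse.support := by rw [hq₂]; simp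
      simpa using this
    have hxy : x ≠ y := by
      rintro rfl
      have hedge : s(m, x) ∈ q.edges := by
        have : s(m, x) ∈ q.reverse.edges := by rw [hq₂]; simp
        simpa [SimpleGraph.Walk.edges_reverse] using this
      have := hc'.edges_nodup
      simp only [SimpleGraph.Walk.edges_cons, List.nodup_cons] at this
      exact this.1 hedge
    have hxs : x ∈ (SimpleGraph.Walk.cons hadj q).support := by simp
    have hys : y ∈ (SimpleGraph.Walk.cons hadj q).support := by simp [hyq]
    exact hxy (h m x y hadj h₂ (hmax' x (hmemrot x hxs)) (hmax' y (hmemrot y hys)))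

lemma connected_of_parent {V : Type*} (G : SimpleGraph V) (r : V) (rk : V → ℕ) (f : V → V)
    (h : ∀ v, v ≠ r → G.Adj v (f v) ∧ rk (f v) < rk v) : G.Connected := by
  have key : ∀ N v, rk v ≤ N → G.Reachable v r := by
    intro N
    induction N with
    | zero =>
      intro v hv
      by_cases hvr : v = r
      · exact hvr ▸ Reachable.refl v
      · exact absurd (Nat.lt_of_lt_of_le (h v hvr).2 hv) (Nat.not_lt_zero _)
    | succ N ih =>
      intro v hv
      by_cases hvr : v = r
      · exact hvr ▸ Reachable.refl v
      · exact ((h v hvr).1.reachable).trans (ih _ (Nat.le_of_lt_succ (Nat.lt_of_lt_of_le (h v hvr).2 hv)))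
  haveI : Nonempty V := ⟨r⟩
  exact ⟨fun u v => ((key (rk u) u le_rfl)).trans (key (rk v) v le_rfl).symm⟩

lemma isTree_of_parent {V : Type*} [DecidableEq V] (G : SimpleGraph V) (r : V) (rk : V → ℕ) (f : V → V)
    (h : ∀ v, v ≠ r → G.Adj v (f v) ∧ rk (f v) < rk v)
    (hu : ∀ m x y, G.Adj m x → G.Adj m y → rk x ≤ rk m → rk y ≤ rk m → x = y) :
    G.IsTree :=
  ⟨connected_of_parent G r rk f h, acyclic_of_unique_down G rk hu⟩


structure PT (n : ℕ) where
  p : Fin (n+1) → Fin (n+1)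
  hp0 : p 0 = 0
  hp : ∀ i, i ≠ 0 → p i < i
  m : Multiset (Fin (n+1))

namespace PT
variable {n : ℕ}

def Adj (P : PT n) (a b : Fin (n+1)) : Prop :=
  (a ≠ 0 ∧ P.p a = b) ∨ (b ≠ 0 ∧ P.p b = a)

lemma adj_symm (P : PT n) {a b} (h : P.Adj a b) : P.Adj b a := h.symm

lemma adj_irrefl (P : PT n) (a : Fin (n+1)) : ¬ P.Adj a a := by
  rintro (⟨h1, h2⟩ | ⟨h1, h2⟩) <;> exact absurd h2 (Fin.ne_of_lt (P.hp a h1))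

def graph (P : PT n) : SimpleGraph (Fin (n+1)) where
  Adj := P.Adj
  symm := ⟨fun _ _ h => P.adj_symm h⟩
  loopless := ⟨fun a => P.adj_irrefl a⟩

lemma graph_adj (P : PT n) (a b : Fin (n+1)) : P.graph.Adj a b ↔ P.Adj a b := Iff.rfl

lemma adj_parent (P : PT n) {a : Fin (n+1)} (ha : a ≠ 0) : P.Adj a (P.p a) := Or.inl ⟨ha, rfl⟩

lemma down_unique (P : PT n) {m x : Fin (n+1)} (h : P.Adj m x) (hle : (x:ℕ) ≤ m) :
    x = P.p m ∧ m ≠ 0 := by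
  rcases h with ⟨h1, h2⟩ | ⟨h1, h2⟩
  · exact ⟨h2.symm, h1⟩
  · exact absurd (lt_of_lt_of_le (P.hp x h1) (by exact_mod_cast hle)) (by simp [h2])

lemma isTree (P : PT n) : P.graph.IsTree := by
  apply isTree_of_parent P.graph 0 Fin.val P.p
  · intro v hv
    exact ⟨P.adj_parent hv, P.hp v hv⟩
  · intro m x y hx hy hxm hym
    rw [(P.down_unique hx hxm).1, (P.down_unique hy hym).1]

@[reducible] def toDG (P : PT n) : DualGraph :=
  { V := Fin (n+1), fintypeV := inferInstance, decEqV := inferInstance,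
    graph := P.graph, isTree := P.isTree, deg := fun _ => 1, marks := P.m }

lemma toDG_good (P : PT n) : (toDG P).IsGoodTree := fun _ => rfl

lemma toDG_totalDeg (P : PT n) : (toDG P).totalDeg = n + 1 := by
  simp [DualGraph.totalDeg, toDG]

end PT

end Aux


section AuxMove
open SimpleGraph
namespace PT
variable {n : ℕ}

theorem move (P P' : PT n) (a : Fin (n+1)) (ha : a ≠ 0) (hb' : P'.p a = P.p a)
    (houter : ∀ u w, u ∉ ({a, P.p a} : Finset (Fin (n+1))) →
       w ∉ ({a, P.p a} : Finset (Fin (n+1))) → (P.Adj u w ↔ P'.Adj u w))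
    (hbound : ∀ u, u ∉ ({a, P.p a} : Finset (Fin (n+1))) →
      ((P.Adj u a ∨ P.Adj u (P.p a)) ↔ (P'.Adj u a ∨ P'.Adj u (P.p a))))
    (hmk : ∀ u, u ∉ ({a, P.p a} : Finset (Fin (n+1))) → P.m.count u = P'.m.count u)
    (hmkH : P.m.count a + P.m.count (P.p a) = P'.m.count a + P'.m.count (P.p a)) :
    DualGraph.ConnectedByConicDeformation (toDG P) (toDG P') := by
  classical
  set b := P.p a with hbdef
  have hba : (b : ℕ) < a := P.hp a ha
  have hab : a ≠ b := fun h => absurd (h ▸ hba) (lt_irrefl _)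
  set H : Finset (Fin (n+1)) := {a, b} with hHdef
  have memH : ∀ v : Fin (n+1), v ∈ H ↔ v = a ∨ v = b := by
    intro v; simp [hHdef]
  have haH : a ∈ H := (memH a).2 (Or.inl rfl)
  have hbH : b ∈ H := (memH b).2 (Or.inr rfl)
  have hpb_notH : b ≠ 0 → P.p b ∉ H := by
    intro hb0 hmem
    have hpbb : (P.p b : ℕ) < b := P.hp b hb0
    rcases (memH _).1 hmem with h | h
    · rw [h] at hpbb; omega
    · rw [h] at hpbb; omega
  -- the contracted vertex type
  set T := ({v : Fin (n+1) // v ∉ H} ⊕ Unit) with hTdef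
  let q' : Fin (n+1) → T := fun v => if h : v ∈ H then Sum.inr () else Sum.inl ⟨v, h⟩
  have q'_mem : ∀ v (h : v ∈ H), q' v = Sum.inr () := fun v h => dif_pos h
  have q'_not : ∀ v (h : v ∉ H), q' v = Sum.inl ⟨v, h⟩ := fun v h => dif_neg h
  let KAdj : T → T → Prop := fun s t =>
    match s, t with
    | .inl u, .inl w => P.Adj u.1 w.1
    | .inl u, .inr _ => P.Adj u.1 a ∨ P.Adj u.1 b
    | .inr _, .inl w => P.Adj w.1 a ∨ P.Adj w.1 b
    | .inr _, .inr _ => False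
  let Kg : SimpleGraph T :=
    { Adj := KAdj
      symm := by
        constructor
        rintro (u | u) (w | w) h <;> simp only [KAdj] at h ⊢
        · exact P.adj_symm h
        · exact h
        · exact h
      loopless := by
        constructor
        rintro (u | u) h <;> simp only [KAdj] at h
        exact P.adj_irrefl _ h }
  have Kg_adj : ∀ s t, Kg.Adj s t ↔ KAdj s t := fun _ _ => Iff.rfl
  let rk : T → ℕ := fun t => match t with | .inl u => u.1.1 | .inr _ => b.1
  let f : T → T := fun t => match t with | .inl u => q' (P.p u.1) | .inr _ => q' (P.p b)
  have hu0 : ∀ u : {v : Fin (n+1) // v ∉ H}, Sum.inl u ≠ q' 0 → u.1 ≠ 0 := by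
    intro u hne h0
    by_cases h : (0 : Fin (n+1)) ∈ H
    · exact (h0 ▸ u.2) h
    · exact hne (by rw [q'_not 0 h]; exact congrArg Sum.inl (Subtype.ext h0))
  -- parent condition
  have hpar : ∀ t, t ≠ q' 0 → Kg.Adj t (f t) ∧ rk (f t) < rk t := by
    rintro (u | u) hne
    · have hu : u.1 ≠ 0 := hu0 u hne
      have hpu : (P.p u.1 : ℕ) < u.1 := P.hp u.1 hu
      by_cases hmem : P.p u.1 ∈ H
      · refine ⟨?_, ?_⟩
        · show KAdj (Sum.inl u) (f (Sum.inl u))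
          have : f (Sum.inl u) = Sum.inr () := q'_mem _ hmem
          rw [this]
          rcases (memH _).1 hmem with h | h
          · exact Or.inl (Or.inl ⟨hu, h⟩)
          · exact Or.inr (Or.inl ⟨hu, h⟩)
        · have : f (Sum.inl u) = Sum.inr () := q'_mem _ hmem
          rw [this]
          show (b : ℕ) < u.1
          rcases (memH _).1 hmem with h | h
          · rw [h] at hpu; omega
          · rw [h] at hpu; omega
      · refine ⟨?_, ?_⟩
        · show KAdj (Sum.inl u) (f (Sum.inl u))
          have : f (Sum.inl u) = Sum.inl ⟨P.p u.1, hmem⟩ := q'_not _ hmem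
          rw [this]
          exact P.adj_parent hu
        · have : f (Sum.inl u) = Sum.inl ⟨P.p u.1, hmem⟩ := q'_not _ hmem
          rw [this]; exact hpu
    · have hb0 : b ≠ 0 := by
        intro h
        apply hne
        have : (0 : Fin (n+1)) ∈ H := h ▸ hbH
        rw [q'_mem 0 this]
      have hnot := hpb_notH hb0
      have hf : f (Sum.inr u) = Sum.inl ⟨P.p b, hnot⟩ := q'_not _ hnot
      refine ⟨?_, ?_⟩
      · show KAdj (Sum.inr u) (f (Sum.inr u))
        rw [hf]
        exact Or.inr (Or.inr ⟨hb0, rfl⟩)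
      · rw [hf]; exact P.hp b hb0
  -- down-uniqueness
  have claim : ∀ t x, Kg.Adj t x → rk x ≤ rk t → x = f t := by
    rintro (u | u) (w | w) hadj hle
    · change P.Adj u.1 w.1 at hadj
      obtain ⟨hw, hu⟩ := P.down_unique hadj hle
      have : P.p u.1 ∉ H := hw ▸ w.2
      rw [show f (Sum.inl u) = Sum.inl ⟨P.p u.1, this⟩ from q'_not _ this]
      exact congrArg Sum.inl (Subtype.ext hw)
    · change P.Adj u.1 a ∨ P.Adj u.1 b at hadj
      have hle' : (b : ℕ) ≤ u.1 := hle
      have hpumem : P.p u.1 ∈ H := by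
        rcases hadj with (⟨h1, h2⟩ | ⟨h1, h2⟩) | (⟨h1, h2⟩ | ⟨h1, h2⟩)
        · exact h2 ▸ haH
        · exact absurd (h2 ▸ hbH : u.1 ∈ H) u.2
        · exact h2 ▸ hbH
        · have : (P.p b : ℕ) < b := P.hp b h1
          rw [h2] at this; omega
      rw [show f (Sum.inl u) = Sum.inr () from q'_mem _ hpumem]
    · change P.Adj w.1 a ∨ P.Adj w.1 b at hadj
      have hle' : (w.1 : ℕ) ≤ b := hle
      rcases hadj with (⟨h1, h2⟩ | ⟨h1, h2⟩) | (⟨h1, h2⟩ | ⟨h1, h2⟩)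
      · have : (P.p w.1 : ℕ) < w.1 := P.hp w.1 h1
        rw [h2] at this; omega
      · exact absurd (h2 ▸ hbH : w.1 ∈ H) w.2
      · have : (P.p w.1 : ℕ) < w.1 := P.hp w.1 h1
        rw [h2] at this; omega
      · have hnot : P.p b ∉ H := hpb_notH h1
        rw [show f (Sum.inr u) = Sum.inl ⟨P.p b, hnot⟩ from q'_not _ hnot]
        exact congrArg Sum.inl (Subtype.ext h2.symm)
    · exact absurd hadj (by simp [Kg_adj, KAdj])
  have Ktree : Kg.IsTree := by
    refine isTree_of_parent Kg (q' 0) rk f hpar ?_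
    intro m x y hx hy hxm hym
    rw [claim m x hx hxm, claim m y hy hym]
  let K : DualGraph :=
    { V := T, fintypeV := inferInstance, decEqV := inferInstance,
      graph := Kg, isTree := Ktree,
      deg := fun t => match t with | .inl _ => 1 | .inr _ => 2,
      marks := P.m.map q' }
  -- mark counting
  have count_inl : ∀ u : {v : Fin (n+1) // v ∉ H},
      (P.m.map q').count (Sum.inl u) = P.m.count u.1 := by
    intro u
    rw [Multiset.count_map, Multiset.count_eq_card_filter_eq]
    congr 1
    apply Multiset.filter_congr
    intro v _
    constructor
    · intro h
      by_cases hv : v ∈ H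
      · rw [q'_mem v hv] at h; exact absurd h (by simp)
      · rw [q'_not v hv] at h
        cases h
        rfl
    · rintro rfl
      rw [q'_not u.1 u.2]
  have count_inr : ∀ (s : Multiset (Fin (n+1))),
      (s.map q').count (Sum.inr ()) = (s.filter (· ∈ H)).card := by
    intro s
    rw [Multiset.count_map]
    congr 1
    apply Multiset.filter_congr
    intro v _
    constructor
    · intro h
      by_cases hv : v ∈ H
      · exact hv
      · rw [q'_not v hv] at h; exact absurd h (by simp)
    · intro hv; rw [q'_mem v hv]
  have card_filter : ∀ (s : Multiset (Fin (n+1))),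
      (s.filter (· ∈ H)).card = s.count a + s.count b := by
    intro s
    induction s using Multiset.induction_on with
    | empty => simp
    | cons x t ih =>
      simp only [Multiset.count_cons]
      by_cases hx : x ∈ H
      · rw [Multiset.filter_cons_of_pos _ hx, Multiset.card_cons, ih]
        rcases (memH x).1 hx with rfl | rfl
        · rw [if_pos rfl, if_neg (fun h => hab h.symm)]
          omega
        · rw [if_pos rfl, if_neg hab]
          omega
      · rw [Multiset.filter_cons_of_neg _ hx, ih]
        rw [if_neg (fun h : a = x => hx (h ▸ haH)), if_neg (fun h : b = x => hx (h ▸ hbH))]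
        omega
  -- the contraction property, for any PT with compatible data
  have contr : ∀ Q : PT n, Q.Adj a b →
      (∀ u w : {v : Fin (n+1) // v ∉ H}, (P.Adj u.1 w.1 ↔ Q.Adj u.1 w.1)) →
      (∀ u : {v : Fin (n+1) // v ∉ H}, ((P.Adj u.1 a ∨ P.Adj u.1 b) ↔ (Q.Adj u.1 a ∨ Q.Adj u.1 b))) →
      (∀ u : {v : Fin (n+1) // v ∉ H}, P.m.count u.1 = Q.m.count u.1) →
      (P.m.count a + P.m.count b = Q.m.count a + Q.m.count b) →
      K.IsConicDeformation (toDG Q) := by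
    intro Q hQab hadj hbd hcnt hcntH
    refine ⟨H, ?_, ?_, ?_, ?_⟩
    · show (∑ v ∈ H, 1) = 2
      rw [Finset.sum_const, smul_eq_mul, mul_one, hHdef,
        Finset.card_insert_of_notMem (by simp [hab]), Finset.card_singleton]
    · exact ⟨a, haH⟩
    · -- induced connectedness
      haveI : Nonempty (↑H : Set (Fin (n+1))) := ⟨⟨a, Finset.mem_coe.2 haH⟩⟩
      constructor
      rintro ⟨x, hx⟩ ⟨y, hy⟩
      replace hx := (memH x).1 (Finset.mem_coe.1 hx)
      replace hy := (memH y).1 (Finset.mem_coe.1 hy)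
      by_cases hxy : x = y
      · subst hxy; rfl
      · apply SimpleGraph.Adj.reachable
        show Q.Adj x y
        rcases hx with rfl | rfl <;> rcases hy with rfl | rfl <;>
          first
            | exact absurd rfl hxy
            | exact hQab
            | exact Q.adj_symm hQab
    · refine ⟨Equiv.refl T, ?_, ?_, ?_, ?_, ?_, ?_⟩
      · intro u w
        exact (hadj u w).symm.trans Iff.rfl |>.symm
      · intro u
        show (P.Adj u.1 a ∨ P.Adj u.1 b) ↔ _
        rw [hbd u]
        constructor
        · rintro (h | h)
          · exact ⟨a, haH, h⟩
          · exact ⟨b, hbH, h⟩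
        · rintro ⟨x, hx, h⟩
          rcases (memH x).1 hx with rfl | rfl
          · exact Or.inl h
          · exact Or.inr h
      · intro u; rfl
      · show (2 : ℕ) = ∑ v ∈ H, 1
        rw [Finset.sum_const, smul_eq_mul, mul_one]
        rw [hHdef, Finset.card_insert_of_notMem (by simp [hab]), Finset.card_singleton]
      · intro u
        show (P.m.map q').count (Sum.inl u) = Q.m.count u.1
        rw [count_inl u, hcnt u]
      · show (P.m.map q').count (Sum.inr ()) = (Q.m.filter (· ∈ H)).card
        rw [count_inr, card_filter, card_filter, hcntH]
  refine ⟨K, contr P (P.adj_parent ha) (fun _ _ => Iff.rfl) (fun _ => Iff.rfl)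
    (fun _ => rfl) rfl, contr P' ?_ ?_ ?_ ?_ ?_⟩
  · exact Or.inl ⟨ha, hb'⟩
  · intro u w; exact houter u.1 w.1 u.2 w.2
  · intro u; rw [hbound u.1 u.2]
  · intro u; exact hmk u.1 u.2
  · exact hmkH
end PT

end AuxMove


section AuxChain
open SimpleGraph
namespace PT
variable {n : ℕ}

def mu (P : PT n) : ℕ := (∑ i, (P.p i).1) + (P.m.map Fin.val).sum

protected lemma ext' {P Q : PT n} (h1 : P.p = Q.p) (h2 : P.m = Q.m) : P = Q := by
  cases P; cases Q; cases h1; cases h2; rfl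

def star (n k : ℕ) : PT n :=
  ⟨fun _ => 0, rfl, fun i hi => Fin.pos_of_ne_zero hi, Multiset.replicate k 0⟩

theorem flatten_step (P : PT n) (x : Fin (n+1)) (hx : P.p x ≠ 0) :
    ∃ P' : PT n, DualGraph.ConnectedByConicDeformation (toDG P) (toDG P') ∧
      P'.m = P.m ∧ mu P' < mu P := by
  have hx0 : x ≠ 0 := fun h => hx (h ▸ P.hp0)
  have hux : (P.p x : ℕ) < x := P.hp x hx0
  have hpuu : (P.p (P.p x) : ℕ) < P.p x := P.hp _ hx
  let p' : Fin (n+1) → Fin (n+1) := fun y => if y = x then P.p (P.p x) else P.p y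
  have hp'x : p' x = P.p (P.p x) := if_pos rfl
  have hp'ne : ∀ y, y ≠ x → p' y = P.p y := fun y h => if_neg h
  have hux' : P.p x ≠ x := fun h => by rw [h] at hux; omega
  have hpux : P.p (P.p x) ≠ x := fun h => by rw [h] at hpuu; omega
  let P' : PT n := ⟨p', by rw [hp'ne 0 (Ne.symm hx0), P.hp0], by
      intro i hi
      by_cases hix : i = x
      · subst hix; rw [hp'x]; omega
      · rw [hp'ne i hix]; exact P.hp i hi, P.m⟩
  have memH : ∀ v : Fin (n+1), v ∈ ({P.p x, P.p (P.p x)} : Finset (Fin (n+1))) ↔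
      v = P.p x ∨ v = P.p (P.p x) := by intro v; simp
  have comp : ∀ y w : Fin (n+1), w ≠ P.p x → w ≠ P.p (P.p x) →
      ((y ≠ 0 ∧ p' y = w) ↔ (y ≠ 0 ∧ P.p y = w)) := by
    intro y w hw1 hw2
    by_cases hyx : y = x
    · subst hyx
      rw [hp'x]
      constructor
      · rintro ⟨h1, h2⟩; exact absurd h2.symm hw2
      · rintro ⟨h1, h2⟩; exact absurd h2.symm hw1
    · rw [hp'ne y hyx]
  refine ⟨P', ?_, rfl, ?_⟩
  · apply move P P' (P.p x) hx
    · show p' (P.p x) = P.p (P.p x)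
      exact hp'ne _ hux'
    · -- houter
      intro y w hy hw
      rw [memH] at hy hw
      push_neg at hy hw
      show ((y ≠ 0 ∧ P.p y = w) ∨ (w ≠ 0 ∧ P.p w = y)) ↔
          ((y ≠ 0 ∧ p' y = w) ∨ (w ≠ 0 ∧ p' w = y))
      exact or_congr (comp y w hw.1 hw.2).symm (comp w y hy.1 hy.2).symm
    · -- hbound
      intro y hy
      by_cases hyx : y = x
      · subst hyx
        constructor
        · intro _
          exact Or.inr (Or.inl ⟨hx0, hp'x⟩)
        · intro _
          exact Or.inl (Or.inl ⟨hx0, rfl⟩)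
      · show (((y ≠ 0 ∧ P.p y = P.p x) ∨ (P.p x ≠ 0 ∧ P.p (P.p x) = y)) ∨
              ((y ≠ 0 ∧ P.p y = P.p (P.p x)) ∨ (P.p (P.p x) ≠ 0 ∧ P.p (P.p (P.p x)) = y))) ↔
            (((y ≠ 0 ∧ p' y = P.p x) ∨ (P.p x ≠ 0 ∧ p' (P.p x) = y)) ∨
              ((y ≠ 0 ∧ p' y = P.p (P.p x)) ∨ (P.p (P.p x) ≠ 0 ∧ p' (P.p (P.p x)) = y)))
        rw [hp'ne y hyx, hp'ne (P.p x) hux', hp'ne (P.p (P.p x)) hpux]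
    · intro y _; rfl
    · rfl
  · show (∑ i, (p' i).1) + (P.m.map Fin.val).sum <
      (∑ i, (P.p i).1) + (P.m.map Fin.val).sum
    have : (∑ i, (p' i).1) < ∑ i, (P.p i).1 := by
      apply Finset.sum_lt_sum
      · intro i _
        by_cases hix : i = x
        · subst hix; rw [hp'x]; omega
        · rw [hp'ne i hix]
      · exact ⟨x, Finset.mem_univ x, by rw [hp'x]; omega⟩
    omega

theorem marks_step (P : PT n) (x : Fin (n+1)) (hx : x ∈ P.m) (hx0 : x ≠ 0) :
    ∃ P' : PT n, DualGraph.ConnectedByConicDeformation (toDG P) (toDG P') ∧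
      Multiset.card P'.m = Multiset.card P.m ∧ mu P' < mu P := by
  have hbx : (P.p x : ℕ) < x := P.hp x hx0
  have hbne : P.p x ≠ x := fun h => by rw [h] at hbx; omega
  let g : Fin (n+1) → Fin (n+1) := fun y => if y = x then P.p x else y
  have hgx : g x = P.p x := if_pos rfl
  have hgne : ∀ y, y ≠ x → g y = y := fun y h => if_neg h
  let P' : PT n := ⟨P.p, P.hp0, P.hp, P.m.map g⟩
  have memH : ∀ v : Fin (n+1), v ∈ ({x, P.p x} : Finset (Fin (n+1))) ↔ v = x ∨ v = P.p x := by
    intro v; simp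
  have count_other : ∀ v, v ≠ x → v ≠ P.p x → ∀ s : Multiset (Fin (n+1)),
      (s.map g).count v = s.count v := by
    intro v hv1 hv2 s
    induction s using Multiset.induction_on with
    | empty => simp
    | cons y t ih =>
      rw [Multiset.map_cons, Multiset.count_cons, Multiset.count_cons, ih]
      by_cases hyx : y = x
      · rw [show g y = P.p x from by rw [hyx, hgx],
          if_neg (fun h : v = P.p x => hv2 h), if_neg (fun h : v = y => hv1 (h.trans hyx))]
      · rw [hgne y hyx]
  have count_x : ∀ s : Multiset (Fin (n+1)), (s.map g).count x = 0 := by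
    intro s
    induction s using Multiset.induction_on with
    | empty => simp
    | cons y t ih =>
      rw [Multiset.map_cons, Multiset.count_cons, ih]
      by_cases hyx : y = x
      · rw [show g y = P.p x from by rw [hyx, hgx], if_neg (fun h : x = P.p x => hbne h.symm)]
      · rw [hgne y hyx, if_neg (fun h : x = y => hyx h.symm)]
  have count_b : ∀ s : Multiset (Fin (n+1)),
      (s.map g).count (P.p x) = s.count (P.p x) + s.count x := by
    intro s
    induction s using Multiset.induction_on with
    | empty => simp
    | cons y t ih =>
      rw [Multiset.map_cons, Multiset.count_cons, Multiset.count_cons, Multiset.count_cons, ih]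
      by_cases hyx : y = x
      · rw [show g y = P.p x from by rw [hyx, hgx], if_pos rfl,
          if_neg (fun h : P.p x = y => hbne (h.trans hyx)), if_pos hyx.symm]
        omega
      · rw [hgne y hyx, if_neg (fun h : x = y => hyx h.symm)]
        by_cases h2 : P.p x = y
        · rw [if_pos h2]; omega
        · rw [if_neg h2]; omega
  refine ⟨P', ?_, by simp [P'], ?_⟩
  · apply move P P' x hx0 rfl (fun _ _ _ _ => Iff.rfl) (fun _ _ => Iff.rfl)
    · intro v hv
      rw [memH] at hv; push_neg at hv
      exact (count_other v hv.1 hv.2 P.m).symm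
    · show P.m.count x + P.m.count (P.p x) = (P.m.map g).count x + (P.m.map g).count (P.p x)
      rw [count_x, count_b]
      omega
  · show (∑ i, (P.p i).1) + ((P.m.map g).map Fin.val).sum <
      (∑ i, (P.p i).1) + (P.m.map Fin.val).sum
    have hlt : ((P.m.map g).map Fin.val).sum < (P.m.map Fin.val).sum := by
      obtain ⟨t, ht⟩ := Multiset.exists_cons_of_mem hx
      rw [ht, Multiset.map_cons, Multiset.map_cons, Multiset.map_cons, Multiset.sum_cons,
        Multiset.sum_cons, hgx]
      have hle : ((t.map g).map Fin.val).sum ≤ (t.map Fin.val).sum := by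
        rw [Multiset.map_map]
        apply Multiset.sum_map_le_sum_map
        intro y _
        show ((g y : Fin (n+1)) : ℕ) ≤ (y : ℕ)
        by_cases hyx : y = x
        · subst hyx; rw [hgx]; omega
        · rw [hgne y hyx]
      omega
    omega

end PT

def DGJoined (A B : DualGraph) : Prop :=
  ∃ (m : ℕ) (c : Fin (m + 1) → DualGraph), c 0 = A ∧ c (Fin.last m) = B ∧
    (∀ i, (c i).IsGoodTree) ∧
    (∀ i : Fin m, DualGraph.ConnectedByConicDeformation (c i.castSucc) (c i.succ))

lemma DGJoined.refl {A : DualGraph} (h : A.IsGoodTree) : DGJoined A A :=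
  ⟨0, fun _ => A, rfl, rfl, fun _ => h, fun i => i.elim0⟩

lemma DGJoined.cons {A B C : DualGraph} (hA : A.IsGoodTree)
    (h : DualGraph.ConnectedByConicDeformation A B) (hBC : DGJoined B C) : DGJoined A C := by
  obtain ⟨m, c, hc0, hcl, hg, hstep⟩ := hBC
  subst hc0
  refine ⟨m + 1, fun i => Fin.cases A c i, Fin.cases_zero .., ?_, ?_, ?_⟩
  · show (Fin.cases A c (Fin.last (m+1)) : DualGraph) = C
    rw [← Fin.succ_last, Fin.cases_succ]
    exact hcl
  · intro i
    induction i using Fin.cases with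
    | zero =>
      show ((Fin.cases A c (0 : Fin (m+2)) : DualGraph)).IsGoodTree
      rw [Fin.cases_zero]
      exact hA
    | succ j =>
      show ((Fin.cases A c j.succ : DualGraph)).IsGoodTree
      rw [Fin.cases_succ]
      exact hg j
  · intro i
    induction i using Fin.cases with
    | zero =>
      have e1 : (Fin.cases A c ((0 : Fin (m+1)).castSucc) : DualGraph) = A := by
        rw [Fin.castSucc_zero]; exact Fin.cases_zero ..
      have e2 : (Fin.cases A c ((0 : Fin (m+1)).succ) : DualGraph) = c 0 := Fin.cases_succ ..
      show DualGraph.ConnectedByConicDeformation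
        (Fin.cases A c ((0 : Fin (m+1)).castSucc)) (Fin.cases A c ((0 : Fin (m+1)).succ))
      rw [e1, e2]
      exact h
    | succ j =>
      have e1 : (Fin.cases A c (j.succ.castSucc) : DualGraph) = c j.castSucc := by
        rw [← Fin.succ_castSucc]; exact Fin.cases_succ ..
      have e2 : (Fin.cases A c (j.succ.succ) : DualGraph) = c j.succ := Fin.cases_succ ..
      show DualGraph.ConnectedByConicDeformation
        (Fin.cases A c (j.succ.castSucc)) (Fin.cases A c (j.succ.succ))
      rw [e1, e2]
      exact hstep j

namespace PT
variable {n : ℕ}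

theorem to_star : ∀ (N : ℕ) (P : PT n), mu P ≤ N →
    DGJoined (toDG P) (toDG (star n (Multiset.card P.m))) := by
  intro N
  induction N with
  | zero =>
    intro P hP
    by_cases h1 : ∃ x, P.p x ≠ 0
    · obtain ⟨x, hx⟩ := h1
      obtain ⟨P', _, _, hlt⟩ := P.flatten_step x hx
      omega
    · by_cases h2 : ∃ x ∈ P.m, x ≠ 0
      · obtain ⟨x, hx, hx0⟩ := h2
        obtain ⟨P', _, _, hlt⟩ := P.marks_step x hx hx0
        omega
      · push_neg at h1 h2
        have : P = star n (Multiset.card P.m) := by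
          apply PT.ext'
          · funext y; exact h1 y
          · exact Multiset.eq_replicate_card.2 h2
        rw [← this]
        exact DGJoined.refl (toDG_good P)
  | succ N ih =>
    intro P hP
    by_cases h1 : ∃ x, P.p x ≠ 0
    · obtain ⟨x, hx⟩ := h1
      obtain ⟨P', hccd, hm, hlt⟩ := P.flatten_step x hx
      have := ih P' (by omega)
      rw [hm] at this
      exact DGJoined.cons (toDG_good P) hccd this
    · by_cases h2 : ∃ x ∈ P.m, x ≠ 0
      · obtain ⟨x, hx, hx0⟩ := h2
        obtain ⟨P', hccd, hm, hlt⟩ := P.marks_step x hx hx0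
        have := ih P' (by omega)
        rw [hm] at this
        exact DGJoined.cons (toDG_good P) hccd this
      · push_neg at h1 h2
        have : P = star n (Multiset.card P.m) := by
          apply PT.ext'
          · funext y; exact h1 y
          · exact Multiset.eq_replicate_card.2 h2
        rw [← this]
        exact DGJoined.refl (toDG_good P)

end PT

end AuxChain


section AuxCanon
universe u
section TreeFacts
open SimpleGraph
variable {V : Type u} [DecidableEq V] {G : SimpleGraph V}

/-- a shortest path realizing the distance -/
lemma exists_shortest_path (hconn : G.Connected) (r w : V) :
    ∃ p : G.Walk r w, p.IsPath ∧ p.length = G.dist r w := by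
  obtain ⟨p, hp⟩ := (hconn r w).exists_walk_length_eq_dist
  refine ⟨p.bypass, p.bypass_isPath, le_antisymm ?_ (SimpleGraph.dist_le _)⟩
  calc p.bypass.length ≤ p.length := p.length_bypass_le
    _ = G.dist r w := hp

lemma tree_parent_exists (hT : G.IsTree) (r : V) {w : V} (hw : w ≠ r) :
    ∃ u, G.Adj w u ∧ G.dist r u + 1 = G.dist r w := by
  have hconn := hT.isConnected
  obtain ⟨p, hp, hl⟩ := exists_shortest_path hconn r w
  have hd0 : G.dist r w ≠ 0 := fun h => hw ((hconn.dist_eq_zero_iff).1 h).symm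
  obtain ⟨u, h, q₂, hq⟩ := SimpleGraph.Walk.exists_eq_cons_of_ne hw p.reverse
  have hlq : q₂.length = G.dist r w - 1 := by
    have := congrArg SimpleGraph.Walk.length hq
    rw [SimpleGraph.Walk.length_reverse, SimpleGraph.Walk.length_cons, hl] at this
    omega
  refine ⟨u, h, ?_⟩
  have h1 : G.dist r u ≤ G.dist r w - 1 := by
    have := SimpleGraph.dist_le q₂.reverse
    rwa [SimpleGraph.Walk.length_reverse, hlq] at this
  have h2 : G.dist r w ≤ G.dist r u + 1 := by
    have htr := hconn.dist_triangle (u := r) (v := u) (w := w)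
    have : G.dist u w ≤ 1 := by
      have := SimpleGraph.dist_le (h.symm.toWalk)
      simpa using this
    omega
  omega

lemma tree_not_mem_support (hconn : G.Connected) {r u w : V}
    (hlt : G.dist r w > G.dist r u) {p : G.Walk r u} (hl : p.length = G.dist r u) :
    w ∉ p.support := by
  intro hmem
  have h1 := SimpleGraph.Walk.length_takeUntil_le p hmem
  have h2 := SimpleGraph.dist_le (p.takeUntil w hmem)
  omega

lemma tree_parent_unique (hT : G.IsTree) (r : V) {w u u' : V}
    (h : G.Adj w u) (h' : G.Adj w u')
    (hd : G.dist r u + 1 = G.dist r w) (hd' : G.dist r u' + 1 = G.dist r w) : u = u' := by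
  have hconn := hT.isConnected
  obtain ⟨p, hp, hl⟩ := exists_shortest_path hconn r u
  obtain ⟨p', hp', hl'⟩ := exists_shortest_path hconn r u'
  have hw : w ∉ p.support := tree_not_mem_support hconn (by omega) hl
  have hw' : w ∉ p'.support := tree_not_mem_support hconn (by omega) hl'
  let Q : G.Walk w r := SimpleGraph.Walk.cons h p.reverse
  let Q' : G.Walk w r := SimpleGraph.Walk.cons h' p'.reverse
  have hQ : Q.IsPath := by
    rw [SimpleGraph.Walk.cons_isPath_iff]
    exact ⟨hp.reverse, by simpa using hw⟩
  have hQ' : Q'.IsPath := by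
    rw [SimpleGraph.Walk.cons_isPath_iff]
    exact ⟨hp'.reverse, by simpa using hw'⟩
  obtain ⟨x, -, hux⟩ := hT.existsUnique_path w r
  have heq : Q = Q' := (hux Q hQ).trans (hux Q' hQ').symm
  have := congrArg (fun q => SimpleGraph.Walk.getVert q 1) heq
  simpa [Q, Q', SimpleGraph.Walk.getVert_cons_succ, SimpleGraph.Walk.getVert_zero] using this

lemma tree_adj_dist (hT : G.IsTree) (r : V) {u w : V} (h : G.Adj u w) :
    G.dist r w = G.dist r u + 1 ∨ G.dist r u = G.dist r w + 1 := by
  have hconn := hT.isConnected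
  have h1 : G.dist r w ≤ G.dist r u + 1 := by
    have htr := hconn.dist_triangle (u := r) (v := u) (w := w)
    have : G.dist u w ≤ 1 := by simpa using SimpleGraph.dist_le h.toWalk
    omega
  have h2 : G.dist r u ≤ G.dist r w + 1 := by
    have htr := hconn.dist_triangle (u := r) (v := w) (w := u)
    have : G.dist w u ≤ 1 := by simpa using SimpleGraph.dist_le h.symm.toWalk
    omega
  have hne : G.dist r u ≠ G.dist r w := by
    intro heq
    have hur : u ≠ r := by
      intro hru
      rw [hru, SimpleGraph.dist_self] at heq
      exact h.ne (hru.trans ((hconn.dist_eq_zero_iff).1 heq.symm))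
    have hd0 : G.dist r u ≠ 0 := fun h0 => hur ((hconn.dist_eq_zero_iff).1 h0).symm
    obtain ⟨p, hp, hl⟩ := exists_shortest_path hconn r u
    obtain ⟨p1, hp1, hl1⟩ := exists_shortest_path hconn r w
    have hwp : w ∉ p.support := by
      intro hmem
      have hsplit := congrArg SimpleGraph.Walk.length (p.take_spec hmem)
      rw [SimpleGraph.Walk.length_append] at hsplit
      have hdrop : (p.dropUntil w hmem).length ≠ 0 :=
        fun h0 => h.ne' (SimpleGraph.Walk.eq_of_length_eq_zero h0)
      have h2' := SimpleGraph.dist_le (p.takeUntil w hmem)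
      omega
    let Q : G.Walk w r := SimpleGraph.Walk.cons h.symm p.reverse
    have hQ : Q.IsPath := by
      rw [SimpleGraph.Walk.cons_isPath_iff]
      exact ⟨hp.reverse, by simpa using hwp⟩
    have hQ1 : p1.reverse.IsPath := hp1.reverse
    obtain ⟨x, -, hux⟩ := hT.existsUnique_path w r
    have heq : Q = p1.reverse := (hux Q hQ).trans (hux p1.reverse hQ1).symm
    have hlen := congrArg SimpleGraph.Walk.length heq
    rw [SimpleGraph.Walk.length_reverse, hl1] at hlen
    have : Q.length = G.dist r u + 1 := by
      show (SimpleGraph.Walk.cons h.symm p.reverse).length = _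
      rw [SimpleGraph.Walk.length_cons, SimpleGraph.Walk.length_reverse, hl]
    omega
  rcases Nat.lt_or_ge (G.dist r u) (G.dist r w) with hlt | hge
  · left; omega
  · right; omega

end TreeFacts

section Canon
open SimpleGraph

lemma card_of_good (G : DualGraph) (hg : G.IsGoodTree) :
    G.totalDeg = Fintype.card G.V := by
  unfold DualGraph.totalDeg
  rw [Finset.sum_congr rfl (fun v _ => hg v), ← Finset.card_eq_sum_ones, Finset.card_univ]

theorem exists_PT (G : DualGraph) (hg : G.IsGoodTree) {n : ℕ}
    (hcard : Fintype.card G.V = n + 1) :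
    ∃ P : PT n, DualGraph.Iso (PT.toDG P) G ∧
      Multiset.card P.m = Multiset.card G.marks := by
  classical
  have hT := G.isTree
  have hconn := hT.isConnected
  have hne : Nonempty G.V := hconn.nonempty
  obtain ⟨r⟩ := hne
  set d : G.V → ℕ := fun v => G.graph.dist r v with hd
  let e0 : Fin (n+1) ≃ G.V := (Fintype.equivFinOfCardEq hcard).symm
  let σ := Tuple.sort (fun i => d (e0 i))
  let E : Fin (n+1) ≃ G.V := σ.trans e0
  have hmono : Monotone (fun i => d (E i)) := Tuple.monotone_sort (fun i => d (e0 i))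
  have hE0 : E 0 = r := by
    have h1 : d (E (E.symm r)) = 0 := by
      rw [Equiv.apply_symm_apply]
      exact SimpleGraph.dist_self
    have h2 : d (E 0) ≤ d (E (E.symm r)) := hmono (Fin.zero_le _)
    have : d (E 0) = 0 := by omega
    exact ((hconn.dist_eq_zero_iff).1 this).symm
  have hEner : ∀ i : Fin (n+1), i ≠ 0 → E i ≠ r := by
    intro i hi h
    exact hi (E.injective (h.trans hE0.symm))
  have hpar : ∀ i : Fin (n+1), i ≠ 0 →
      ∃ j : Fin (n+1), G.graph.Adj (E i) (E j) ∧ d (E j) + 1 = d (E i) := by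
    intro i hi
    obtain ⟨u, hadj, hdist⟩ := tree_parent_exists hT r (hEner i hi)
    exact ⟨E.symm u, by rwa [Equiv.apply_symm_apply], by rwa [Equiv.apply_symm_apply]⟩
  let p : Fin (n+1) → Fin (n+1) := fun i => if h : i = 0 then 0 else (hpar i h).choose
  have hpspec : ∀ i (h : i ≠ 0), G.graph.Adj (E i) (E (p i)) ∧ d (E (p i)) + 1 = d (E i) := by
    intro i h
    have : p i = (hpar i h).choose := dif_neg h
    rw [this]
    exact (hpar i h).choose_spec
  have hplt : ∀ i, i ≠ 0 → p i < i := by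
    intro i h
    by_contra hle
    push_neg at hle
    have h1 : d (E i) ≤ d (E (p i)) := hmono hle
    have h2 := (hpspec i h).2
    omega
  let P : PT n := ⟨p, dif_pos rfl, hplt, G.marks.map E.symm⟩
  have hPadj : ∀ a b : Fin (n+1), G.graph.Adj (E a) (E b) ↔ P.Adj a b := by
    intro a b
    constructor
    · intro h
      rcases tree_adj_dist hT r h with hc | hc
      · -- d (E b) = d (E a) + 1 : a is parent of b
        have hb0 : b ≠ 0 := by
          intro h0
          rw [h0, hE0] at hc
          simp [hd, SimpleGraph.dist_self] at hc
        right
        refine ⟨hb0, ?_⟩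
        have := tree_parent_unique hT r ((hpspec b hb0).1) h.symm ((hpspec b hb0).2) (by omega)
        exact E.injective this
      · have ha0 : a ≠ 0 := by
          intro h0
          rw [h0, hE0] at hc
          simp [hd, SimpleGraph.dist_self] at hc
        left
        refine ⟨ha0, ?_⟩
        have := tree_parent_unique hT r ((hpspec a ha0).1) h ((hpspec a ha0).2) (by omega)
        exact E.injective this
    · rintro (⟨h1, h2⟩ | ⟨h1, h2⟩)
      · rw [← h2]
        exact (hpspec a h1).1
      · rw [← h2]
        exact ((hpspec b h1).1).symm
  refine ⟨P, ⟨E, ?_, ?_, ?_⟩, by simp [P]⟩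
  · intro a b
    exact hPadj a b
  · intro v
    exact hg (E v)
  · intro v
    show G.marks.count (E v) = (G.marks.map E.symm).count v
    have := Multiset.count_map_eq_count' E.symm G.marks E.symm.injective (E v)
    rwa [Equiv.symm_apply_apply, eq_comm] at this

theorem star_iso (n k : ℕ) (G₀ : DualGraph) (h₀ : G₀.IsStarGoodTree (n+1) k) :
    DualGraph.Iso (PT.toDG (PT.star n k)) G₀ := by
  classical
  obtain ⟨hgood, htot, v₀, hmarks, hadj⟩ := h₀
  have hcard : Fintype.card G₀.V = n + 1 := by
    rw [← card_of_good G₀ hgood, htot]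
  let e1 : Fin (n+1) ≃ G₀.V := (Fintype.equivFinOfCardEq hcard).symm
  let E : Fin (n+1) ≃ G₀.V := e1.trans (Equiv.swap (e1 0) v₀)
  have hE0 : E 0 = v₀ := by
    show Equiv.swap (e1 0) v₀ (e1 0) = v₀
    exact Equiv.swap_apply_left _ _
  have hEv : ∀ x, E x = v₀ ↔ x = 0 := by
    intro x
    constructor
    · intro h
      exact E.injective (h.trans hE0.symm)
    · rintro rfl
      exact hE0
  refine ⟨E, ?_, ?_, ?_⟩
  · intro a b
    refine Iff.trans (hadj (E a) (E b)) ?_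
    show _ ↔ ((a : Fin (n+1)) ≠ 0 ∧ (0 : Fin (n+1)) = b) ∨ ((b : Fin (n+1)) ≠ 0 ∧ (0 : Fin (n+1)) = a)
    constructor
    · rintro (⟨h1, h2⟩ | ⟨h1, h2⟩)
      · refine Or.inr ⟨fun hb => h2 ((hEv b).2 hb), ((hEv a).1 h1).symm⟩
      · refine Or.inl ⟨fun ha => h2 ((hEv a).2 ha), ((hEv b).1 h1).symm⟩
    · rintro (⟨h1, h2⟩ | ⟨h1, h2⟩)
      · exact Or.inr ⟨(hEv b).2 h2.symm, fun h => h1 ((hEv a).1 h)⟩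
      · exact Or.inl ⟨(hEv a).2 h2.symm, fun h => h1 ((hEv b).1 h)⟩
  · intro v
    exact hgood (E v)
  · intro v
    rw [hmarks]
    show (Multiset.replicate k v₀).count (E v) = (Multiset.replicate k (0 : Fin (n+1))).count v
    rw [Multiset.count_replicate, Multiset.count_replicate]
    by_cases hv : (v : Fin (n+1)) = 0
    · rw [if_pos ((hEv v).2 hv).symm, if_pos hv.symm]
    · rw [if_neg (fun h => hv ((hEv v).1 h.symm)), if_neg (fun h => hv h.symm)]

end Canon

end AuxCanon

/-- **Key claim in Lemma 5.4.** Every good tree of total degree `e ≥ 1` with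
`k` marked points can be joined to the star good tree `G₀` by a finite chain of
good trees in which each pair of consecutive good trees is connected by a conic
deformation. -/
theorem good_tree_connected_to_star_by_conic_deformations
    (e k : ℕ) (he : 1 ≤ e) (G₀ : DualGraph) (h₀ : G₀.IsStarGoodTree e k)
    (G : DualGraph) (hg : G.IsGoodTree) (hd : G.totalDeg = e)
    (hk : Multiset.card G.marks = k) :
    ∃ (m : ℕ) (c : Fin (m + 1) → DualGraph),
      DualGraph.Iso (c 0) G ∧ DualGraph.Iso (c (Fin.last m)) G₀ ∧
      (∀ i, (c i).IsGoodTree) ∧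
      (∀ i : Fin m,
        DualGraph.ConnectedByConicDeformation (c i.castSucc) (c i.succ)) := by
  obtain ⟨n, rfl⟩ : ∃ n, e = n + 1 := ⟨e - 1, by omega⟩
  have hcard : Fintype.card G.V = n + 1 := by
    rw [← card_of_good G hg, hd]
  obtain ⟨P, hiso, hcardm⟩ := exists_PT G hg hcard
  have hkP : Multiset.card P.m = k := hcardm.trans hk
  have hjoin := PT.to_star (PT.mu P) P le_rfl
  rw [hkP] at hjoin
  obtain ⟨m, c, hc0, hcl, hgood, hstep⟩ := hjoin
  refine ⟨m, c, ?_, ?_, hgood, hstep⟩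
  · rw [hc0]; exact hiso
  · rw [hcl]; exact star_iso n k G₀ h₀
end

section
/- Let G be a dual graph (a finite tree with degrees and marked points) such that d_v ∈ {0,1} for every vertex v and deg(G) ≥ 1. Then there exists a good tree G′ obtained from G by a finite sequence of contractions (each along a two-vertex subgraph consisting of a vertex of degree 0 and an adjacent vertex); in particular G is a specialization of the good tree G′ and deg(G′) = Σ_{v∈G} d_v = deg(G). -/
section AuxLemmasForLemma55
open SimpleGraph


private lemma connected_sdiff_of_reachable {V : Type} {G : SimpleGraph V} {x y : V}
    (hG : G.Connected)
    (hr : (G \ fromEdgeSet {s(x,y)}).Reachable x y) :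
    (G \ fromEdgeSet {s(x,y)}).Connected := by
  have key : ∀ a b : V, G.Adj a b → (G \ fromEdgeSet {s(x,y)}).Reachable a b := by
    intro a b hab
    by_cases h : s(a,b) = s(x,y)
    · rw [Sym2.eq_iff] at h
      rcases h with ⟨rfl, rfl⟩ | ⟨rfl, rfl⟩
      · exact hr
      · exact hr.symm
    · apply Adj.reachable
      rw [sdiff_adj]
      refine ⟨hab, ?_⟩
      simp only [fromEdgeSet_adj, Set.mem_singleton_iff]
      tauto
  have hpre : (G \ fromEdgeSet {s(x,y)}).Preconnected := by
    intro a b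
    obtain ⟨p⟩ := hG.preconnected a b
    induction p with
    | nil => exact Reachable.refl _
    | cons h p ih => exact (key _ _ h).trans ih
  have : Nonempty V := hG.nonempty
  exact Connected.mk hpre

private lemma exists_delete {V : Type} [Fintype V] (G : SimpleGraph V) [Fintype G.edgeSet]
    (hc : G.Connected) (h : ¬ ∀ e ∈ G.edgeSet, G.IsBridge e) :
    ∃ (G' : SimpleGraph V) (_ : Fintype G'.edgeSet), G'.Connected ∧
      G'.edgeFinset.card + 1 = G.edgeFinset.card := by
  classical
  push_neg at h
  obtain ⟨e, he, hbe⟩ := h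
  revert he hbe
  refine Sym2.ind (fun x y he hbe => ?_) e
  rw [mem_edgeSet] at he
  rw [isBridge_iff] at hbe
  have hr := not_not.mp hbe
  refine ⟨G \ fromEdgeSet {s(x,y)}, inferInstance, connected_sdiff_of_reachable hc hr, ?_⟩
  have hE : (G \ fromEdgeSet {s(x,y)}).edgeFinset = G.edgeFinset.erase s(x,y) := by
    ext e
    simp only [mem_edgeFinset, edgeSet_sdiff, edgeSet_fromEdgeSet, Set.mem_diff,
      Finset.mem_erase, Set.mem_setOf_eq, Set.mem_singleton_iff]
    constructor
    · rintro ⟨h1, h2⟩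
      refine ⟨fun hh => h2 ⟨hh, ?_⟩, h1⟩
      subst hh
      simp [Sym2.mk_isDiag_iff, he.ne]
    · rintro ⟨h1, h2⟩
      exact ⟨h2, fun hh => h1 hh.1⟩
  rw [hE, Finset.card_erase_of_mem (by rwa [mem_edgeFinset, mem_edgeSet])]
  have : 1 ≤ G.edgeFinset.card :=
    Finset.card_pos.mpr ⟨s(x,y), by rwa [mem_edgeFinset, mem_edgeSet]⟩
  omega


private lemma connected_card_le {V : Type} [Fintype V] :
    ∀ (k : ℕ) (G : SimpleGraph V) [Fintype G.edgeSet], G.Connected → G.edgeFinset.card ≤ k →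
      Fintype.card V ≤ G.edgeFinset.card + 1 := by
  classical
  intro k
  induction k with
  | zero =>
    intro G _ hc hk
    have hb : ∀ e ∈ G.edgeSet, G.IsBridge e := by
      intro e he
      exfalso
      have : e ∈ G.edgeFinset := by rwa [mem_edgeFinset]
      have := Finset.card_pos.mpr ⟨e, this⟩
      omega
    have ht : G.IsTree := ⟨hc, isAcyclic_iff_forall_edge_isBridge.mpr hb⟩
    exact le_of_eq ht.card_edgeFinset.symm
  | succ n ih =>
    intro G _ hc hk
    by_cases hb : ∀ e ∈ G.edgeSet, G.IsBridge e
    · have ht : G.IsTree := ⟨hc, isAcyclic_iff_forall_edge_isBridge.mpr hb⟩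
      exact le_of_eq ht.card_edgeFinset.symm
    · obtain ⟨G', _, hc', hcard⟩ := exists_delete G hc hb
      have := ih G' hc' (by omega)
      omega

private lemma isTree_of_connected_of_card {V : Type} [Fintype V] (G : SimpleGraph V)
    [Fintype G.edgeSet] (hc : G.Connected) (hcard : G.edgeFinset.card + 1 = Fintype.card V) :
    G.IsTree := by
  classical
  refine ⟨hc, ?_⟩
  by_cases hb : ∀ e ∈ G.edgeSet, G.IsBridge e
  · exact isAcyclic_iff_forall_edge_isBridge.mpr hb
  · exfalso
    obtain ⟨G', _, hc', hcard'⟩ := exists_delete G hc hb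
    have := connected_card_le G'.edgeFinset.card G' hc' le_rfl
    omega

section ContractionStep
open SimpleGraph

variable (G : DualGraph) (v w : G.V)

/-- Vertex type for the contraction of `G` along `{v, w}`. -/
private abbrev NV : Type := {u : G.V // u ∉ ({v, w} : Finset G.V)} ⊕ Unit

private def stepAdj : NV G v w → NV G v w → Prop
  | Sum.inl u, Sum.inl u' => G.graph.Adj u.1 u'.1
  | Sum.inl u, Sum.inr _ => G.graph.Adj u.1 v ∨ G.graph.Adj u.1 w
  | Sum.inr _, Sum.inl u => G.graph.Adj u.1 v ∨ G.graph.Adj u.1 w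
  | Sum.inr _, Sum.inr _ => False

private def stepGraph : SimpleGraph (NV G v w) where
  Adj := stepAdj G v w
  symm := by
    constructor
    rintro (a | a) (b | b) h
    · exact h.symm
    · exact h
    · exact h
    · exact h
  loopless := by
    constructor
    rintro (a | a) h
    · exact G.graph.irrefl h
    · exact h

private def toNV : G.V → NV G v w := fun a =>
  if h : a ∈ ({v, w} : Finset G.V) then Sum.inr () else Sum.inl ⟨a, h⟩

private lemma toNV_mem {a : G.V} (h : a ∈ ({v, w} : Finset G.V)) :
    toNV G v w a = Sum.inr () := by simp [toNV, h]

private lemma toNV_not_mem {a : G.V} (h : a ∉ ({v, w} : Finset G.V)) :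
    toNV G v w a = Sum.inl ⟨a, h⟩ := by simp [toNV, h]

private lemma stepGraph_connected : (stepGraph G v w).Connected := by
  have key : ∀ a b : G.V, G.graph.Adj a b →
      (stepGraph G v w).Reachable (toNV G v w a) (toNV G v w b) := by
    intro a b hab
    by_cases ha : a ∈ ({v, w} : Finset G.V) <;> by_cases hb : b ∈ ({v, w} : Finset G.V)
    · rw [toNV_mem G v w ha, toNV_mem G v w hb]
    · rw [toNV_mem G v w ha, toNV_not_mem G v w hb]
      refine Adj.reachable ?_
      show stepAdj G v w (Sum.inr ()) (Sum.inl ⟨b, hb⟩)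
      simp only [Finset.mem_insert, Finset.mem_singleton] at ha
      rcases ha with rfl | rfl
      · exact Or.inl hab.symm
      · exact Or.inr hab.symm
    · rw [toNV_not_mem G v w ha, toNV_mem G v w hb]
      refine Adj.reachable ?_
      show stepAdj G v w (Sum.inl ⟨a, ha⟩) (Sum.inr ())
      simp only [Finset.mem_insert, Finset.mem_singleton] at hb
      rcases hb with rfl | rfl
      · exact Or.inl hab
      · exact Or.inr hab
    · rw [toNV_not_mem G v w ha, toNV_not_mem G v w hb]
      exact Adj.reachable (show stepAdj G v w (Sum.inl ⟨a, ha⟩) (Sum.inl ⟨b, hb⟩) from hab)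
  have reach : ∀ a b : G.V,
      (stepGraph G v w).Reachable (toNV G v w a) (toNV G v w b) := by
    intro a b
    obtain ⟨p⟩ := G.isTree.isConnected.preconnected a b
    induction p with
    | nil => exact Reachable.refl _
    | cons h p ih => exact (key _ _ h).trans ih
  have hv : toNV G v w v = Sum.inr () := toNV_mem G v w (by simp)
  have : Nonempty (NV G v w) := ⟨Sum.inr ()⟩
  refine Connected.mk (fun x y => ?_)
  rcases x with u | x <;> rcases y with u' | y
  · have := reach u.1 u'.1
    rwa [toNV_not_mem G v w u.2, toNV_not_mem G v w u'.2] at this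
  · have := reach u.1 v
    rwa [toNV_not_mem G v w u.2, hv] at this
  · have := reach v u'.1
    rwa [toNV_not_mem G v w u'.2, hv] at this
  · exact Reachable.refl _

private lemma noTriangle {a b c : G.V} (hab : G.graph.Adj a b)
    (hbc : G.graph.Adj b c) (hac : G.graph.Adj a c) : False := by
  have hne1 : a ≠ b := hab.ne
  have hne2 : b ≠ c := hbc.ne
  have hne3 : a ≠ c := hac.ne
  have hcyc : (SimpleGraph.Walk.cons hab
      (SimpleGraph.Walk.cons hbc (SimpleGraph.Walk.cons hac.symm SimpleGraph.Walk.nil))).IsCycle := by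
    simp [SimpleGraph.Walk.isCycle_def, SimpleGraph.Walk.isTrail_def, List.nodup_cons,
      Sym2.eq_iff, hne1, hne2, hne3, hne1.symm, hne2.symm, hne3.symm]
  exact G.isTree.IsAcyclic _ hcyc

private lemma pair_edge {a b : G.V} (ha : a ∈ ({v, w} : Finset G.V))
    (hb : b ∈ ({v, w} : Finset G.V)) (hab : a ≠ b) : s(a, b) = s(v, w) := by
  simp only [Finset.mem_insert, Finset.mem_singleton] at ha hb
  rcases ha with rfl | rfl <;> rcases hb with rfl | rfl
  · exact absurd rfl hab
  · rfl
  · exact Sym2.eq_swap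
  · exact absurd rfl hab

private lemma toNV_eq_cases {a c : G.V} (h : toNV G v w a = toNV G v w c) :
    a = c ∨ (a ∈ ({v, w} : Finset G.V) ∧ c ∈ ({v, w} : Finset G.V)) := by
  by_cases ha : a ∈ ({v, w} : Finset G.V) <;> by_cases hc : c ∈ ({v, w} : Finset G.V)
  · exact Or.inr ⟨ha, hc⟩
  · rw [toNV_mem G v w ha, toNV_not_mem G v w hc] at h; exact absurd h (by simp)
  · rw [toNV_not_mem G v w ha, toNV_mem G v w hc] at h; exact absurd h (by simp)
  · rw [toNV_not_mem G v w ha, toNV_not_mem G v w hc] at h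
    simp only [Sum.inl.injEq, Subtype.mk.injEq] at h
    exact Or.inl h

private lemma stepGraph_card_edges (hvw : G.graph.Adj v w)
    [Fintype G.graph.edgeSet] [Fintype (stepGraph G v w).edgeSet] :
    (stepGraph G v w).edgeFinset.card + 1 = G.graph.edgeFinset.card := by
  classical
  have hmem : s(v, w) ∈ G.graph.edgeFinset := by rwa [SimpleGraph.mem_edgeFinset]
  have hbij : (G.graph.edgeFinset.erase s(v, w)).card = (stepGraph G v w).edgeFinset.card := by
    refine Finset.card_nbij (Sym2.map (toNV G v w)) ?_ ?_ ?_
    · -- maps into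
      intro e he
      rw [Finset.mem_coe, Finset.mem_erase, SimpleGraph.mem_edgeFinset] at he
      induction e using Sym2.ind with | _ a b =>
      obtain ⟨hne, hadj⟩ := he
      rw [SimpleGraph.mem_edgeSet] at hadj
      rw [Sym2.map_pair_eq, Finset.mem_coe, SimpleGraph.mem_edgeFinset, SimpleGraph.mem_edgeSet]
      by_cases ha : a ∈ ({v, w} : Finset G.V) <;> by_cases hb : b ∈ ({v, w} : Finset G.V)
      · exact absurd (pair_edge G v w ha hb hadj.ne) hne
      · rw [toNV_mem G v w ha, toNV_not_mem G v w hb]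
        show stepAdj G v w (Sum.inr ()) (Sum.inl ⟨b, hb⟩)
        simp only [Finset.mem_insert, Finset.mem_singleton] at ha
        rcases ha with rfl | rfl
        · exact Or.inl hadj.symm
        · exact Or.inr hadj.symm
      · rw [toNV_not_mem G v w ha, toNV_mem G v w hb]
        show stepAdj G v w (Sum.inl ⟨a, ha⟩) (Sum.inr ())
        simp only [Finset.mem_insert, Finset.mem_singleton] at hb
        rcases hb with rfl | rfl
        · exact Or.inl hadj
        · exact Or.inr hadj
      · rw [toNV_not_mem G v w ha, toNV_not_mem G v w hb]
        exact (hadj : stepAdj G v w (Sum.inl ⟨a, ha⟩) (Sum.inl ⟨b, hb⟩))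
    · -- injective
      have main : ∀ a b c d : G.V, G.graph.Adj a b → G.graph.Adj c d →
          s(a, b) ≠ s(v, w) → s(c, d) ≠ s(v, w) →
          toNV G v w a = toNV G v w c → toNV G v w b = toNV G v w d → s(a, b) = s(c, d) := by
        intro a b c d hadj₁ hadj₂ hne₁ hne₂ h1 h2
        rcases toNV_eq_cases G v w h1 with rfl | ⟨ha, hc⟩
        · rcases toNV_eq_cases G v w h2 with rfl | ⟨hb, hd⟩
          · rfl
          · by_cases hbd : b = d
            · rw [hbd]
            · exfalso
              have hbd' : G.graph.Adj b d := by
                have := pair_edge G v w hb hd hbd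
                rw [Sym2.eq_iff] at this
                rcases this with ⟨rfl, rfl⟩ | ⟨rfl, rfl⟩
                · exact hvw
                · exact hvw.symm
              exact noTriangle G hadj₁ hbd' hadj₂
        · rcases toNV_eq_cases G v w h2 with rfl | ⟨hb, hd⟩
          · by_cases hac : a = c
            · rw [hac]
            · exfalso
              have hac' : G.graph.Adj a c := by
                have := pair_edge G v w ha hc hac
                rw [Sym2.eq_iff] at this
                rcases this with ⟨rfl, rfl⟩ | ⟨rfl, rfl⟩
                · exact hvw
                · exact hvw.symm
              exact noTriangle G hac' hadj₂ hadj₁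
          · exact absurd (pair_edge G v w ha hb hadj₁.ne) hne₁
      intro e₁ he₁ e₂ he₂ heq
      rw [Finset.mem_coe, Finset.mem_erase, SimpleGraph.mem_edgeFinset] at he₁ he₂
      induction e₁ using Sym2.ind with | _ a b =>
      induction e₂ using Sym2.ind with | _ c d =>
      obtain ⟨hne₁, hadj₁⟩ := he₁
      obtain ⟨hne₂, hadj₂⟩ := he₂
      rw [SimpleGraph.mem_edgeSet] at hadj₁ hadj₂
      rw [Sym2.map_pair_eq, Sym2.map_pair_eq, Sym2.eq_iff] at heq
      rcases heq with ⟨h1, h2⟩ | ⟨h1, h2⟩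
      · exact main a b c d hadj₁ hadj₂ hne₁ hne₂ h1 h2
      · rw [main a b d c hadj₁ hadj₂.symm hne₁ (by rwa [Sym2.eq_swap] at hne₂) h1 h2]
        exact Sym2.eq_swap
    · -- surjective
      intro e he
      rw [Finset.mem_coe, SimpleGraph.mem_edgeFinset] at he
      induction e using Sym2.ind with | _ x y =>
      rw [SimpleGraph.mem_edgeSet] at he
      have ptmem : ∀ a : G.V, a ∈ ({v, w} : Finset G.V) → ∀ u : {u : G.V // u ∉ ({v, w} : Finset G.V)},
          G.graph.Adj u.1 a →
          s(x, y) ∈ Sym2.map (toNV G v w) '' ↑(G.graph.edgeFinset.erase s(v, w)) →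
          True := fun _ _ _ _ _ => trivial
      clear ptmem
      rcases x with u | x <;> rcases y with u' | y
      · refine ⟨s(u.1, u'.1), ?_, ?_⟩
        · rw [Finset.mem_coe, Finset.mem_erase, SimpleGraph.mem_edgeFinset, SimpleGraph.mem_edgeSet]
          refine ⟨?_, he⟩
          intro hh
          rw [Sym2.eq_iff] at hh
          rcases hh with ⟨h1, _⟩ | ⟨h1, _⟩ <;> exact u.2 (by simp [h1])
        · rw [Sym2.map_pair_eq, toNV_not_mem G v w u.2, toNV_not_mem G v w u'.2]
      · rcases (he : stepAdj G v w (Sum.inl u) (Sum.inr y)) with h | h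
        · refine ⟨s(u.1, v), ?_, ?_⟩
          · rw [Finset.mem_coe, Finset.mem_erase, SimpleGraph.mem_edgeFinset, SimpleGraph.mem_edgeSet]
            refine ⟨?_, h⟩
            intro hh
            rw [Sym2.eq_iff] at hh
            rcases hh with ⟨h1, _⟩ | ⟨h1, _⟩ <;> exact u.2 (by simp [h1])
          · rw [Sym2.map_pair_eq, toNV_not_mem G v w u.2, toNV_mem G v w (by simp)]
        · refine ⟨s(u.1, w), ?_, ?_⟩
          · rw [Finset.mem_coe, Finset.mem_erase, SimpleGraph.mem_edgeFinset, SimpleGraph.mem_edgeSet]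
            refine ⟨?_, h⟩
            intro hh
            rw [Sym2.eq_iff] at hh
            rcases hh with ⟨h1, _⟩ | ⟨h1, _⟩ <;> exact u.2 (by simp [h1])
          · rw [Sym2.map_pair_eq, toNV_not_mem G v w u.2, toNV_mem G v w (by simp)]
      · rcases (he : stepAdj G v w (Sum.inr x) (Sum.inl u')) with h | h
        · refine ⟨s(v, u'.1), ?_, ?_⟩
          · rw [Finset.mem_coe, Finset.mem_erase, SimpleGraph.mem_edgeFinset, SimpleGraph.mem_edgeSet]
            refine ⟨?_, h.symm⟩
            intro hh
            rw [Sym2.eq_iff] at hh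
            rcases hh with ⟨_, h1⟩ | ⟨_, h1⟩ <;> exact u'.2 (by simp [h1])
          · rw [Sym2.map_pair_eq, toNV_not_mem G v w u'.2, toNV_mem G v w (by simp)]
        · refine ⟨s(w, u'.1), ?_, ?_⟩
          · rw [Finset.mem_coe, Finset.mem_erase, SimpleGraph.mem_edgeFinset, SimpleGraph.mem_edgeSet]
            refine ⟨?_, h.symm⟩
            intro hh
            rw [Sym2.eq_iff] at hh
            rcases hh with ⟨_, h1⟩ | ⟨_, h1⟩ <;> exact u'.2 (by simp [h1])
          · rw [Sym2.map_pair_eq, toNV_not_mem G v w u'.2, toNV_mem G v w (by simp)]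
      · exact (he : stepAdj G v w (Sum.inr x) (Sum.inr y)).elim
  rw [← hbij, Finset.card_erase_of_mem hmem]
  have : 1 ≤ G.graph.edgeFinset.card := Finset.card_pos.mpr ⟨_, hmem⟩
  omega

private lemma card_NV (hvw : G.graph.Adj v w) :
    Fintype.card (NV G v w) + 1 = Fintype.card G.V := by
  classical
  have h2 : Fintype.card G.V - 2 + 1 = Fintype.card G.V - 1 := by
    have : ({v, w} : Finset G.V).card ≤ Fintype.card G.V := Finset.card_le_univ _
    rw [Finset.card_pair hvw.ne] at this
    omega
  rw [Fintype.card_sum, Fintype.card_unit, Fintype.card_subtype_compl]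
  have hc : Fintype.card {u : G.V // u ∈ ({v, w} : Finset G.V)} = 2 := by
    rw [Fintype.card_coe, Finset.card_pair hvw.ne]
  rw [hc]
  have : 2 ≤ Fintype.card G.V := by
    have : ({v, w} : Finset G.V).card ≤ Fintype.card G.V := Finset.card_le_univ _
    rwa [Finset.card_pair hvw.ne] at this
  omega

private lemma stepGraph_isTree (hvw : G.graph.Adj v w) : (stepGraph G v w).IsTree := by
  classical
  apply isTree_of_connected_of_card _ (stepGraph_connected G v w)
  have h1 := stepGraph_card_edges G v w hvw
  have h2 := G.isTree.card_edgeFinset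
  have h3 := card_NV G v w hvw
  omega

/-- The contraction of the dual graph `G` along `{v, w}`. -/
private def contractStep (hvw : G.graph.Adj v w) : DualGraph where
  V := NV G v w
  fintypeV := inferInstance
  decEqV := inferInstance
  graph := stepGraph G v w
  isTree := stepGraph_isTree G v w hvw
  deg := Sum.elim (fun u => G.deg u.1) (fun _ => G.deg v + G.deg w)
  marks := G.marks.map (toNV G v w)

private lemma contractStep_totalDeg (hvw : G.graph.Adj v w) :
    (contractStep G v w hvw).totalDeg = G.totalDeg := by
  classical
  show (∑ x : NV G v w, Sum.elim (fun u : {u : G.V // u ∉ ({v, w} : Finset G.V)} => G.deg u.1)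
    (fun _ => G.deg v + G.deg w) x) = ∑ x : G.V, G.deg x
  rw [Fintype.sum_sum_type]
  simp only [Sum.elim_inl, Sum.elim_inr, Finset.sum_const, Finset.card_univ, Fintype.card_unit,
    one_smul]
  have h1 : (∑ u : {u : G.V // u ∉ ({v, w} : Finset G.V)}, G.deg u.1)
      = ∑ u ∈ ({v, w} : Finset G.V)ᶜ, G.deg u := by
    rw [Finset.sum_subtype (({v, w} : Finset G.V)ᶜ) (fun x => Finset.mem_compl) G.deg]
  have h2 : G.deg v + G.deg w = ∑ u ∈ ({v, w} : Finset G.V), G.deg u :=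
    (Finset.sum_pair hvw.ne).symm
  rw [h1, h2, Finset.sum_compl_add_sum]

private lemma contractStep_isContraction (hvw : G.graph.Adj v w) :
    G.IsContractionAlong (contractStep G v w hvw) {v, w} := by
  classical
  refine ⟨⟨v, by simp⟩, ?_, Equiv.refl _, ?_, ?_, ?_, ?_, ?_, ?_⟩
  · -- induced subgraph on {v, w} is connected
    have hne : Nonempty (↑(↑({v, w} : Finset G.V) : Set G.V)) :=
      ⟨⟨v, by simp⟩⟩
    refine Connected.mk (fun a b => ?_)
    have ha := a.2
    have hb := b.2
    simp only [Finset.coe_insert, Set.mem_insert_iff, Finset.coe_singleton,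
      Set.mem_singleton_iff] at ha hb
    by_cases hab : a.1 = b.1
    · rw [Subtype.ext hab]
    · apply SimpleGraph.Adj.reachable
      show G.graph.Adj a.1 b.1
      rcases ha with h1 | h1 <;> rcases hb with h2 | h2 <;> rw [h1, h2]
      · exact absurd (h1.trans h2.symm) hab
      · exact hvw
      · exact hvw.symm
      · exact absurd (h1.trans h2.symm) hab
  · intro u u'
    exact Iff.rfl
  · intro u
    constructor
    · rintro (h | h)
      · exact ⟨v, by simp, h⟩
      · exact ⟨w, by simp, h⟩
    · rintro ⟨h, hmem, hadj⟩
      simp only [Finset.mem_insert, Finset.mem_singleton] at hmem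
      rcases hmem with rfl | rfl
      · exact Or.inl hadj
      · exact Or.inr hadj
  · intro u
    rfl
  · show G.deg v + G.deg w = _
    exact (Finset.sum_pair hvw.ne).symm
  · intro u
    show Multiset.count (Sum.inl u) (G.marks.map (toNV G v w)) = _
    rw [Multiset.count_map, Multiset.count_eq_card_filter_eq]
    congr 1
    apply Multiset.filter_congr
    intro a _
    constructor
    · intro h
      by_cases ha : a ∈ ({v, w} : Finset G.V)
      · rw [toNV_mem G v w ha] at h; exact absurd h (by simp)
      · rw [toNV_not_mem G v w ha] at h
        simp only [Sum.inl.injEq] at h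
        rw [h]
    · intro h
      rw [← h, toNV_not_mem G v w u.2]
  · show Multiset.count (Sum.inr ()) (G.marks.map (toNV G v w)) = _
    rw [Multiset.count_map]
    congr 1
    apply Multiset.filter_congr
    intro a _
    constructor
    · intro h
      by_cases ha : a ∈ ({v, w} : Finset G.V)
      · exact ha
      · rw [toNV_not_mem G v w ha] at h; exact absurd h (by simp)
    · intro h
      rw [toNV_mem G v w h]

end ContractionStep

private theorem aux : ∀ (n : ℕ) (G : DualGraph), Fintype.card G.V ≤ n →
    (∀ v : G.V, G.deg v = 0 ∨ G.deg v = 1) → 1 ≤ G.totalDeg →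
    ∃ (m : ℕ) (c : Fin (m + 1) → DualGraph),
      c 0 = G ∧
      (c (Fin.last m)).IsGoodTree ∧
      (c (Fin.last m)).totalDeg = G.totalDeg ∧
      ∀ i : Fin m, ∃ v w : (c i.castSucc).V,
        (c i.castSucc).deg v = 0 ∧ (c i.castSucc).graph.Adj v w ∧
        (c i.castSucc).IsContractionAlong (c i.succ) {v, w} := by
  intro n
  induction n with
  | zero =>
    intro G hcard h01 hd
    exfalso
    have he : IsEmpty G.V := Fintype.card_eq_zero_iff.mp (le_antisymm hcard (Nat.zero_le _))
    have : G.totalDeg = 0 := by simp [DualGraph.totalDeg, Finset.univ_eq_empty]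
    omega
  | succ n ih =>
    intro G hcard h01 hd
    by_cases hgood : ∀ x : G.V, G.deg x = 1
    · exact ⟨0, fun _ => G, rfl, hgood, rfl, fun i => i.elim0⟩
    · push_neg at hgood
      obtain ⟨v, hv1⟩ := hgood
      have hv : G.deg v = 0 := (h01 v).resolve_right hv1
      have hex : ∃ u : G.V, G.deg u = 1 := by
        by_contra hno
        push_neg at hno
        have : G.totalDeg = 0 :=
          Finset.sum_eq_zero (fun x _ => (h01 x).resolve_right (hno x))
        omega
      obtain ⟨u, hu⟩ := hex
      have hvu : v ≠ u := by
        intro h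
        rw [h] at hv
        omega
      obtain ⟨p⟩ := G.isTree.isConnected.preconnected v u
      obtain ⟨w, hvw⟩ : ∃ w : G.V, G.graph.Adj v w := by
        cases p with
        | nil => exact absurd rfl hvu
        | cons h q => exact ⟨_, h⟩
      set G₁ := contractStep G v w hvw with hG₁
      have hcard1 : Fintype.card G₁.V + 1 = Fintype.card G.V := card_NV G v w hvw
      have htot1 : G₁.totalDeg = G.totalDeg := contractStep_totalDeg G v w hvw
      have h01' : ∀ x : G₁.V, G₁.deg x = 0 ∨ G₁.deg x = 1 := by
        rintro (x | x)
        · exact h01 x.1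
        · show G.deg v + G.deg w = 0 ∨ G.deg v + G.deg w = 1
          have := h01 w
          omega
      obtain ⟨m, c', hc0, hglast, htd, hsteps⟩ :=
        ih G₁ (by omega) h01' (by omega)
      refine ⟨m + 1, Fin.cases G c', ?_, ?_, ?_, ?_⟩
      · rfl
      · simp only [← Fin.succ_last, Fin.cases_succ]
        exact hglast
      · simp only [← Fin.succ_last, Fin.cases_succ]
        rw [htd, htot1]
      · intro i
        rcases Fin.eq_zero_or_eq_succ i with rfl | ⟨j, rfl⟩
        · simp only [Fin.castSucc_zero, Fin.cases_zero, Fin.cases_succ]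
          rw [hc0]
          exact ⟨v, w, hv, hvw, contractStep_isContraction G v w hvw⟩
        · simp only [← Fin.succ_castSucc, Fin.cases_succ]
          exact hsteps j

end AuxLemmasForLemma55

/-- **Lemma 5.5.** Let `G` be a dual graph all of whose vertex degrees are `0`
or `1`, with `deg(G) ≥ 1`. Then a good tree `G′` can be obtained from `G` by a
finite sequence of contractions, each along a two-vertex subgraph consisting of
a vertex of degree `0` and an adjacent vertex; in particular `G` is a
specialization of the good tree `G′` and `deg(G′) = deg(G)`. -/
theorem dual_graph_specializes_good_tree
    (G : DualGraph) (h01 : ∀ v : G.V, G.deg v = 0 ∨ G.deg v = 1)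
    (hd : 1 ≤ G.totalDeg) :
    ∃ (m : ℕ) (c : Fin (m + 1) → DualGraph),
      c 0 = G ∧
      (c (Fin.last m)).IsGoodTree ∧
      (c (Fin.last m)).totalDeg = G.totalDeg ∧
      ∀ i : Fin m, ∃ v w : (c i.castSucc).V,
        (c i.castSucc).deg v = 0 ∧ (c i.castSucc).graph.Adj v w ∧
        (c i.castSucc).IsContractionAlong (c i.succ) {v, w} := by
  exact aux (Fintype.card G.V) G le_rfl h01 hd
end

section
/- Let S, Z, Y be topological spaces, let f : Z → S be a continuous map, and let g : Y → S be a proper continuous map (closed with compact fibers, i.e., universally closed) all of whose fibers g⁻¹(s), s ∈ S, are nonempty and connected. If Z is connected, then the fiber product Z ×_S Y = {(z,y) ∈ Z × Y : f(z) = g(y)}, with the subspace topology of the product, is connected. -/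
/-- **Topological content of Lemma 5.6.** Let `f : Z → S` be continuous and
`g : Y → S` a proper continuous map all of whose fibers are nonempty and
connected. If `Z` is connected, then the fiber product
`Z ×_S Y = {(z, y) | f z = g y}` (with the subspace topology of the product)
is connected. -/
theorem fiber_product_connected
    {S Z Y : Type*} [TopologicalSpace S] [TopologicalSpace Z] [TopologicalSpace Y]
    (f : Z → S) (hf : Continuous f) (g : Y → S) (hg : IsProperMap g)
    (hfib : ∀ s : S, (g ⁻¹' {s}).Nonempty ∧ IsConnected (g ⁻¹' {s}))
    (hZ : ConnectedSpace Z) :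
    IsConnected {p : Z × Y | f p.1 = g p.2} := by
  rw [isConnected_iff_connectedSpace]
  set W : Set (Z × Y) := {p : Z × Y | f p.1 = g p.2} with hW
  let π : W → Z := fun p => p.1.1
  have hπc : Continuous π := continuous_fst.comp continuous_subtype_val
  -- π is a proper map (it is the pullback of the proper map g along f)
  have hπ : IsProperMap π := by
    rw [isProperMap_iff_ultrafilter]
    refine ⟨hπc, fun 𝒰 z hz => ?_⟩
    have hg' : Filter.Tendsto g (Filter.map (fun p : W => p.1.2) 𝒰) (nhds (f z)) := by
      rw [Filter.tendsto_map'_iff]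
      have : (g ∘ fun p : W => p.1.2) = fun p : W => f (π p) := by
        funext p; exact p.2.symm
      rw [this]
      exact (hf.tendsto z).comp hz
    obtain ⟨y, hy, hle⟩ :=
      hg.ultrafilter_le_nhds_of_tendsto (𝒰 := 𝒰.map (fun p : W => p.1.2)) hg'
    refine ⟨⟨(z, y), hy.symm⟩, rfl, ?_⟩
    rw [nhds_induced, ← Filter.map_le_iff_le_comap, nhds_prod_eq]
    rw [Filter.le_prod]
    exact ⟨hz, hle⟩
  -- fibers of π are connected and nonempty
  have hfibπ : ∀ z : Z, IsConnected (π ⁻¹' {z}) := by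
    intro z
    obtain ⟨hne, hconn⟩ := hfib (f z)
    haveI : ConnectedSpace (g ⁻¹' {f z}) := Subtype.connectedSpace hconn
    let m : (g ⁻¹' {f z}) → W := fun y => ⟨(z, y.1), (y.2 : g y.1 = f z).symm⟩
    have hm : Continuous m :=
      Continuous.subtype_mk (continuous_const.prodMk continuous_subtype_val) _
    have hrange : π ⁻¹' {z} = Set.range m := by
      ext p
      constructor
      · intro hp
        have hp1 : p.1.1 = z := hp
        refine ⟨⟨p.1.2, ?_⟩, ?_⟩
        · show g p.1.2 = f z
          rw [← hp1]; exact p.2.symm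
        · apply Subtype.ext
          exact Prod.ext hp1.symm rfl
      · rintro ⟨y, rfl⟩
        rfl
    rw [hrange]
    exact isConnected_range hm
  -- π is surjective
  have hsurj : Function.Surjective π := fun z => by
    obtain ⟨y, hy⟩ := (hfibπ z).nonempty
    exact ⟨y, hy⟩
  -- closedness transfer
  have hcl : ∀ T : Set Z, IsClosed T ↔ IsClosed (π ⁻¹' T) := by
    intro T
    constructor
    · exact fun hT => hT.preimage hπc
    · intro hT
      have : π '' (π ⁻¹' T) = T := Set.image_preimage_eq T hsurj
      rw [← this]
      exact hπ.isClosedMap _ hT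
  obtain ⟨z0⟩ := hZ.toNonempty
  have := preimage_connectedComponent_connected hfibπ
    (Topology.isCoinducing_iff_isClosed.mpr fun T => (hcl T).symm) z0
  rw [PreconnectedSpace.connectedComponent_eq_univ, Set.preimage_univ] at this
  exact connectedSpace_iff_univ.mpr this
end
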